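/- Let t = exp(iξ) for ξ ∈ [-π, π] and a > 0, Δx > 0. Define the 2×2 complex matrix G = (a/Δx²) · [[2(t⁻¹ - 2 + t), (1/2)(-t⁻² + t⁻¹ + 1 - t)], [-t⁻¹ + 1 + t - t², (1/4)(t⁻² + 8t⁻¹ - 18 + 8t + t²)]]. Then the characteristic polynomial of G equals λ² + c₁λ + c₂ with c₁ = 2a(9 + cos ξ) sin²(ξ/2)/Δx² and c₂ = 64 a² sin⁴(ξ/2)/Δx⁴. -/
import Mathlib


open Polynomial Complex

theorem stmt_0 (a Δx ξ : ℝ) (ha : 0 < a) (hΔx : 0 < Δx)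
    (hξ : ξ ∈ Set.Icc (-Real.pi) Real.pi)
    (t : ℂ) (ht : t = Complex.exp (Complex.I * ξ))
    (G : Matrix (Fin 2) (Fin 2) ℂ)
    (hG : G = ((a : ℂ) / (Δx : ℂ)^2) •
      !![2 * (t⁻¹ - 2 + t), (1/2) * (-t⁻¹^2 + t⁻¹ + 1 - t);
         -t⁻¹ + 1 + t - t^2, (1/4) * (t⁻¹^2 + 8*t⁻¹ - 18 + 8*t + t^2)])
    (c₁ c₂ : ℝ)
    (hc₁ : c₁ = 2 * a * (9 + Real.cos ξ) * Real.sin (ξ/2) ^ 2 / Δx ^ 2)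
    (hc₂ : c₂ = 64 * a ^ 2 * Real.sin (ξ/2) ^ 4 / Δx ^ 4) :
    G.charpoly = X ^ 2 + C (c₁ : ℂ) * X + C (c₂ : ℂ) := by
  -- abbreviation
  set c : ℝ := Real.cos ξ with hc
  -- t ≠ 0
  have htne : t ≠ 0 := ht ▸ Complex.exp_ne_zero _
  -- sum identity : t + t⁻¹ = 2 cos ξ
  have hsum : t + t⁻¹ = 2 * (c : ℂ) := by
    rw [ht, ← Complex.exp_neg]
    have h1 : Complex.I * (ξ : ℂ) = (ξ : ℂ) * Complex.I := by ring
    rw [h1, Complex.exp_mul_I, ← neg_mul, Complex.exp_mul_I]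
    rw [Complex.cos_neg, Complex.sin_neg]
    have h2 : ((c : ℝ) : ℂ) = Complex.cos (ξ : ℂ) := by
      rw [hc, Complex.ofReal_cos]
    rw [h2]; ring
  -- inverse in terms of t
  have hinv : t⁻¹ = 2 * (c : ℂ) - t := by linear_combination hsum
  -- quadratic relation
  have hq : t * t⁻¹ = 1 := mul_inv_cancel₀ htne
  rw [hinv] at hq
  have h' : t ^ 2 - 2 * (c : ℂ) * t + 1 = 0 := by linear_combination -hq
  -- half-angle
  have hsin : Real.sin (ξ / 2) ^ 2 = (1 - c) / 2 := by
    have h1 := Real.cos_two_mul' (ξ / 2)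
    have h2 := Real.sin_sq_add_cos_sq (ξ / 2)
    have h3 : 2 * (ξ / 2) = ξ := by ring
    rw [h3] at h1
    rw [hc]; linarith
  have hsC : Complex.sin ((ξ : ℂ) / 2) ^ 2 = (1 - (c : ℂ)) / 2 := by
    rw [show ((ξ : ℂ) / 2) = ((ξ / 2 : ℝ) : ℂ) by push_cast; ring,
      ← Complex.ofReal_sin, ← Complex.ofReal_pow, hsin]
    push_cast; ring
  have hsC4 : Complex.sin ((ξ : ℂ) / 2) ^ 4 = ((1 - (c : ℂ)) / 2) ^ 2 := by
    rw [show Complex.sin ((ξ : ℂ) / 2) ^ 4 =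
      (Complex.sin ((ξ : ℂ) / 2) ^ 2) ^ 2 by ring, hsC]
  -- trace
  have htr : G.trace = -(c₁ : ℂ) := by
    rw [hG, Matrix.trace_fin_two]
    simp only [Matrix.smul_apply, Matrix.cons_val', Matrix.cons_val_zero,
      Matrix.empty_val', Matrix.cons_val_fin_one, Matrix.cons_val_one,
      Matrix.head_cons, Matrix.head_fin_const, Matrix.of_apply, smul_eq_mul]
    rw [hc₁]
    push_cast
    rw [hsC, hinv]
    linear_combination ((a : ℂ) / (Δx : ℂ) ^ 2) * (1 / 2) * h'
  -- determinant
  have hdet : G.det = (c₂ : ℂ) := by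
    rw [hG, Matrix.det_fin_two]
    simp only [Matrix.smul_apply, Matrix.cons_val', Matrix.cons_val_zero,
      Matrix.empty_val', Matrix.cons_val_fin_one, Matrix.cons_val_one,
      Matrix.head_cons, Matrix.head_fin_const, Matrix.of_apply, smul_eq_mul]
    rw [hc₂]
    push_cast
    rw [hsC4, hinv]
    linear_combination ((a : ℂ) / (Δx : ℂ) ^ 2) ^ 2 *
      (-(t ^ 2) / 2 + (c : ℂ) * t - 2 * (c : ℂ) + 3 / 2) * h'
  have e1 : G 0 0 + G 1 1 = -(c₁ : ℂ) := by rw [← Matrix.trace_fin_two]; exact htr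
  have e2 : G 0 0 * G 1 1 - G 0 1 * G 1 0 = (c₂ : ℂ) := by
    rw [← Matrix.det_fin_two]; exact hdet
  have E1 : C (G 0 0) + C (G 1 1) = -C ((c₁ : ℝ) : ℂ) := by
    rw [← map_add, e1, map_neg]
  have E2 : C (G 0 0) * C (G 1 1) - C (G 0 1) * C (G 1 0) = C ((c₂ : ℝ) : ℂ) := by
    rw [← map_mul, ← map_mul, ← map_sub, e2]
  rw [Matrix.charpoly, Matrix.det_fin_two]
  rw [Matrix.charmatrix_apply_eq, Matrix.charmatrix_apply_eq,
    Matrix.charmatrix_apply_ne _ _ _ (by decide),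
    Matrix.charmatrix_apply_ne _ _ _ (by decide)]
  linear_combination (-(X : ℂ[X])) * E1 + E2
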